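/- Let u, v ∈ ℝ² with 2 ≤ ‖u‖ ≤ 2.52 and 2 ≤ ‖v‖ ≤ 2.52 and ‖u - v‖ ≥ 2. Then the angle between u and v at the origin is greater than π/4. -/

import Mathlib

theorem angle_gt_pi_div_four (u v : EuclideanSpace ℝ (Fin 2))
    (hu1 : 2 ≤ ‖u‖) (hu2 : ‖u‖ ≤ 2.52)
    (hv1 : 2 ≤ ‖v‖) (hv2 : ‖v‖ ≤ 2.52)
    (huv : 2 ≤ ‖u - v‖) :
    InnerProductGeometry.angle u v > Real.pi / 4 := by
  have hu0 : (0:ℝ) < ‖u‖ := by linarith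
  have hv0 : (0:ℝ) < ‖v‖ := by linarith
  have hinner : 2 * (inner ℝ u v : ℝ) = ‖u‖^2 + ‖v‖^2 - ‖u - v‖^2 := by
    have h := @norm_sub_sq_real (EuclideanSpace ℝ (Fin 2)) _ _ u v
    linarith
  have hs : (1.414:ℝ) < Real.sqrt 2 := by
    nlinarith [Real.sq_sqrt (by norm_num : (0:ℝ) ≤ 2), Real.sqrt_nonneg 2]
  have hlt : Real.cos (InnerProductGeometry.angle u v) < Real.sqrt 2 / 2 := by
    rw [InnerProductGeometry.cos_angle, div_lt_div_iff₀ (by positivity) (by norm_num)]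
    nlinarith [sq_nonneg (‖u‖ - ‖v‖), mul_pos hu0 hv0, sq_nonneg (‖u‖ - 2), sq_nonneg (‖v‖ - 2),
      sq_nonneg (‖u‖ + ‖v‖ - 4)]
  by_contra h
  push_neg at h
  have h1 : Real.cos (Real.pi / 4) ≤ Real.cos (InnerProductGeometry.angle u v) :=
    Real.cos_le_cos_of_nonneg_of_le_pi (InnerProductGeometry.angle_nonneg u v)
      (by linarith [Real.pi_pos]) h
  rw [Real.cos_pi_div_four] at h1
  linarith
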